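/- The orthogonal complement ℒ^⊥ of ℒ = ran(K*) + ran(SK*) satisfies ℒ^⊥ = (ker(S+1) ∩ ker K) ⊕ (ker(S−1) ∩ ker K), and E = S(2K*K − I) acts on these two summands as +1 and −1 respectively; in particular ℒ^⊥ is E-invariant and E restricted to ℒ^⊥ is a self-adjoint unitary. -/

import Mathlib

open Matrix

variable {V : Type*} [Fintype V] [DecidableEq V]

/-- The symmetric arc set of a simple graph: ordered pairs of adjacent vertices. -/
abbrev SimpleGraph.Arc (G : SimpleGraph V) [DecidableRel G.Adj] :=
  {p : V × V // G.Adj p.1 p.2}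

/-- The weighted terminal-incidence matrix `K`, `K_{u,a} = 1/√(d̃ u)` if `t(a) = u`. -/
noncomputable def Kmat (G : SimpleGraph V) [DecidableRel G.Adj] (dt : V → ℕ) :
    Matrix V G.Arc ℝ :=
  fun u a => if a.1.2 = u then 1 / Real.sqrt (dt u) else 0

/-- The arc-reversal matrix `S`, `(S ψ)(a) = ψ(ā)`. -/
def Smat (G : SimpleGraph V) [DecidableRel G.Adj] : Matrix G.Arc G.Arc ℝ :=
  fun a b => if b.1 = (a.1.2, a.1.1) then 1 else 0

/-- The diagonal matrix `D` with entries `d(u)/d̃(u)`. -/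
noncomputable def Dmat (G : SimpleGraph V) [DecidableRel G.Adj] (dt : V → ℕ) :
    Matrix V V ℝ :=
  Matrix.diagonal fun u => (G.degree u : ℝ) / (dt u)

/-- The Dirichlet random-walk matrix `T`, `T_{u,v} = 1/√(d̃(u) d̃(v))` for `u ~ v`. -/
noncomputable def Tmat (G : SimpleGraph V) [DecidableRel G.Adj] (dt : V → ℕ) :
    Matrix V V ℝ :=
  fun u v => if G.Adj u v then 1 / Real.sqrt ((dt u : ℝ) * (dt v : ℝ)) else 0

set_option linter.unusedSectionVars false

def SimpleGraph.Arc.rev {G : SimpleGraph V} [DecidableRel G.Adj] (a : G.Arc) : G.Arc :=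
  ⟨(a.1.2, a.1.1), a.2.symm⟩

lemma smat_mulVec (G : SimpleGraph V) [DecidableRel G.Adj] (f : G.Arc → ℝ) (a : G.Arc) :
    (Smat G *ᵥ f) a = f a.rev := by
  unfold Matrix.mulVec Smat dotProduct
  rw [Finset.sum_eq_single a.rev]
  · simp [SimpleGraph.Arc.rev]
  · intro b _ hb
    simp only []
    rw [if_neg, zero_mul]
    intro h
    exact hb (Subtype.ext h)
  · simp

lemma smat_transpose (G : SimpleGraph V) [DecidableRel G.Adj] :
    (Smat G).transpose = Smat G := by
  ext a b
  simp only [Matrix.transpose_apply, Smat, Prod.ext_iff]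
  have : ((↑a:V×V).1 = (↑b:V×V).2 ∧ (↑a:V×V).2 = (↑b:V×V).1) ↔ ((↑b:V×V).1 = (↑a:V×V).2 ∧ (↑b:V×V).2 = (↑a:V×V).1) := by
    constructor <;> rintro ⟨h1, h2⟩ <;> exact ⟨h2.symm, h1.symm⟩
  simp only [this]

lemma Sl_apply {G : SimpleGraph V} [DecidableRel G.Adj] (ψ : EuclideanSpace ℝ G.Arc)
    (a : G.Arc) : Matrix.toEuclideanLin (Smat G) ψ a = ψ a.rev :=
  smat_mulVec G ψ a

lemma rev_rev {G : SimpleGraph V} [DecidableRel G.Adj] (a : G.Arc) : a.rev.rev = a := rfl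

lemma Sl_Sl {G : SimpleGraph V} [DecidableRel G.Adj] (ψ : EuclideanSpace ℝ G.Arc) :
    Matrix.toEuclideanLin (Smat G) (Matrix.toEuclideanLin (Smat G) ψ) = ψ := by
  ext a
  rw [Sl_apply, Sl_apply, rev_rev]

lemma mem_range_orthogonal_iff {E F : Type*} [NormedAddCommGroup E] [InnerProductSpace ℝ E]
    [NormedAddCommGroup F] [InnerProductSpace ℝ F] [FiniteDimensional ℝ E]
    [FiniteDimensional ℝ F] (T : E →ₗ[ℝ] F) (ψ : F) :
    ψ ∈ (LinearMap.range T)ᗮ ↔ LinearMap.adjoint T ψ = 0 := by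
  rw [Submodule.mem_orthogonal]
  constructor
  · intro h
    have h2 := h (T (LinearMap.adjoint T ψ)) ⟨_, rfl⟩
    rw [← LinearMap.adjoint_inner_right] at h2
    exact inner_self_eq_zero.mp h2
  · rintro h x ⟨y, rfl⟩
    rw [← LinearMap.adjoint_inner_right, h, inner_zero_right]

lemma adjoint_toEuclideanLin {m n : Type*} [Fintype m] [Fintype n] [DecidableEq m]
    [DecidableEq n] (A : Matrix m n ℝ) :
    LinearMap.adjoint (Matrix.toEuclideanLin A) = Matrix.toEuclideanLin A.transpose := by
  rw [← Matrix.conjTranspose_eq_transpose_of_trivial,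
    Matrix.toEuclideanLin_conjTranspose_eq_adjoint]

lemma toEuclideanLin_mul_apply {l m n : Type*} [Fintype l] [Fintype m] [Fintype n]
    [DecidableEq m] [DecidableEq n]
    (A : Matrix l m ℝ) (B : Matrix m n ℝ) (x : EuclideanSpace ℝ n) :
    Matrix.toEuclideanLin (A * B) x = Matrix.toEuclideanLin A (Matrix.toEuclideanLin B x) := by
  ext i
  simp [Matrix.toEuclideanLin_apply, Matrix.mulVec_mulVec]

lemma toEuclideanLin_one {n : Type*} [Fintype n] [DecidableEq n] (x : EuclideanSpace ℝ n) :
    Matrix.toEuclideanLin (1 : Matrix n n ℝ) x = x := by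
  ext i
  simp [Matrix.toEuclideanLin_apply]

theorem aux_main {W : Type*} [Fintype W] [DecidableEq W] (G : SimpleGraph V) [DecidableRel G.Adj]
    (A : Matrix W G.Arc ℝ) :
    let K := Matrix.toEuclideanLin A
    let E := Matrix.toEuclideanLin (Smat G * ((2 : ℝ) • (A.transpose * A) - 1))
    let L := LinearMap.range (Matrix.toEuclideanLin A.transpose) ⊔
      LinearMap.range (Matrix.toEuclideanLin (Smat G * A.transpose))
    Lᗮ = (LinearMap.ker (Matrix.toEuclideanLin (Smat G + 1)) ⊓ LinearMap.ker K) ⊔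
        (LinearMap.ker (Matrix.toEuclideanLin (Smat G - 1)) ⊓ LinearMap.ker K) ∧
    (∀ ψ, ψ ∈ LinearMap.ker (Matrix.toEuclideanLin (Smat G + 1)) ⊓ LinearMap.ker K →
      E ψ = ψ) ∧
    (∀ ψ, ψ ∈ LinearMap.ker (Matrix.toEuclideanLin (Smat G - 1)) ⊓ LinearMap.ker K →
      E ψ = -ψ) ∧
    Submodule.map E Lᗮ = Lᗮ ∧
    (∀ ψ ∈ Lᗮ, E (E ψ) = ψ) ∧
    (∀ ψ ∈ Lᗮ, ∀ φ ∈ Lᗮ, inner ℝ (E ψ) φ = (inner ℝ ψ (E φ) : ℝ)) := by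
  intro K E L
  set S' := Matrix.toEuclideanLin (Smat G) with hS'
  -- membership characterization of Lᗮ
  have hmem : ∀ ψ : EuclideanSpace ℝ G.Arc, ψ ∈ Lᗮ ↔ K ψ = 0 ∧ K (S' ψ) = 0 := by
    intro ψ
    show ψ ∈ (LinearMap.range (Matrix.toEuclideanLin A.transpose) ⊔
      LinearMap.range (Matrix.toEuclideanLin (Smat G * A.transpose)))ᗮ ↔ _
    rw [← Submodule.inf_orthogonal, Submodule.mem_inf, mem_range_orthogonal_iff,
      mem_range_orthogonal_iff, adjoint_toEuclideanLin, adjoint_toEuclideanLin,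
      Matrix.transpose_transpose, Matrix.transpose_mul, smat_transpose,
      Matrix.transpose_transpose, toEuclideanLin_mul_apply]
  -- E acts as -S' on ker K
  have hE : ∀ ψ : EuclideanSpace ℝ G.Arc, K ψ = 0 → E ψ = -(S' ψ) := by
    intro ψ h
    show Matrix.toEuclideanLin (Smat G * ((2 : ℝ) • (A.transpose * A) - 1)) ψ = _
    rw [toEuclideanLin_mul_apply]
    have h2 : Matrix.toEuclideanLin ((2 : ℝ) • (A.transpose * A) - 1) ψ = -ψ := by
      rw [map_sub, _root_.map_smul, LinearMap.sub_apply, LinearMap.smul_apply,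
        toEuclideanLin_mul_apply]
      have h3 : Matrix.toEuclideanLin A ψ = 0 := h
      rw [h3, map_zero, smul_zero, toEuclideanLin_one, zero_sub]
    rw [h2, map_neg]
  have hSS : ∀ ψ : EuclideanSpace ℝ G.Arc, S' (S' ψ) = ψ := Sl_Sl
  have hSp : ∀ χ : EuclideanSpace ℝ G.Arc,
      Matrix.toEuclideanLin (Smat G + 1) χ = S' χ + χ := by
    intro χ
    rw [map_add, LinearMap.add_apply, toEuclideanLin_one]
  have hSm : ∀ χ : EuclideanSpace ℝ G.Arc,
      Matrix.toEuclideanLin (Smat G - 1) χ = S' χ - χ := by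
    intro χ
    rw [map_sub, LinearMap.sub_apply, toEuclideanLin_one]
  -- memberships of the two eigenspace pieces
  have hmemP : ∀ ψ : EuclideanSpace ℝ G.Arc,
      ψ ∈ LinearMap.ker (Matrix.toEuclideanLin (Smat G + 1)) ⊓ LinearMap.ker K ↔
        S' ψ = -ψ ∧ K ψ = 0 := by
    intro ψ
    rw [Submodule.mem_inf, LinearMap.mem_ker, LinearMap.mem_ker, hSp]
    constructor
    · rintro ⟨h1, h2⟩
      exact ⟨by linear_combination (norm := module) h1, h2⟩
    · rintro ⟨h1, h2⟩
      exact ⟨by rw [h1]; abel, h2⟩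
  have hmemM : ∀ ψ : EuclideanSpace ℝ G.Arc,
      ψ ∈ LinearMap.ker (Matrix.toEuclideanLin (Smat G - 1)) ⊓ LinearMap.ker K ↔
        S' ψ = ψ ∧ K ψ = 0 := by
    intro ψ
    rw [Submodule.mem_inf, LinearMap.mem_ker, LinearMap.mem_ker, hSm, sub_eq_zero]
  -- part 1
  have part1 : Lᗮ = (LinearMap.ker (Matrix.toEuclideanLin (Smat G + 1)) ⊓ LinearMap.ker K) ⊔
      (LinearMap.ker (Matrix.toEuclideanLin (Smat G - 1)) ⊓ LinearMap.ker K) := by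
    ext ψ
    rw [hmem, Submodule.mem_sup]
    constructor
    · rintro ⟨hK, hKS⟩
      refine ⟨(2⁻¹ : ℝ) • (ψ - S' ψ), ?_, (2⁻¹ : ℝ) • (ψ + S' ψ), ?_, by module⟩
      · rw [hmemP]
        constructor
        · rw [_root_.map_smul, map_sub, hSS]
          module
        · rw [_root_.map_smul, map_sub, hK, hKS]
          simp
      · rw [hmemM]
        constructor
        · rw [_root_.map_smul, map_add, hSS]
          module
        · rw [_root_.map_smul, map_add, hK, hKS]
          simp
    · rintro ⟨a, ha, b, hb, rfl⟩
      rw [hmemP] at ha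
      rw [hmemM] at hb
      obtain ⟨ha1, ha2⟩ := ha
      obtain ⟨hb1, hb2⟩ := hb
      constructor
      · rw [map_add, ha2, hb2, add_zero]
      · rw [map_add, map_add, ha1, hb1, map_neg, ha2, hb2, neg_zero, add_zero]
  -- parts 2 and 3
  have part2 : ∀ ψ, ψ ∈ LinearMap.ker (Matrix.toEuclideanLin (Smat G + 1)) ⊓
      LinearMap.ker K → E ψ = ψ := by
    intro ψ hψ
    rw [hmemP] at hψ
    rw [hE ψ hψ.2, hψ.1, neg_neg]
  have part3 : ∀ ψ, ψ ∈ LinearMap.ker (Matrix.toEuclideanLin (Smat G - 1)) ⊓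
      LinearMap.ker K → E ψ = -ψ := by
    intro ψ hψ
    rw [hmemM] at hψ
    rw [hE ψ hψ.2, hψ.1]
  -- E maps Lᗮ to itself
  have hEperp : ∀ ψ ∈ Lᗮ, E ψ ∈ Lᗮ := by
    intro ψ hψ
    rw [hmem] at hψ ⊢
    obtain ⟨hK, hKS⟩ := hψ
    rw [hE ψ hK]
    refine ⟨by rw [map_neg, hKS, neg_zero], ?_⟩
    rw [map_neg, map_neg, hSS, hK, neg_zero]
  have hEE : ∀ ψ ∈ Lᗮ, E (E ψ) = ψ := by
    intro ψ hψ
    rw [hmem] at hψ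
    have h1 : K (E ψ) = 0 := by
      rw [hE ψ hψ.1, map_neg, hψ.2, neg_zero]
    rw [hE _ h1, hE ψ hψ.1, map_neg, hSS, neg_neg]
  have part4 : Submodule.map E Lᗮ = Lᗮ := by
    apply le_antisymm
    · rintro _ ⟨ψ, hψ, rfl⟩
      exact hEperp ψ hψ
    · intro ψ hψ
      exact ⟨E ψ, hEperp ψ hψ, hEE ψ hψ⟩
  -- self-adjointness on Lᗮ
  have hSadj : ∀ ψ φ : EuclideanSpace ℝ G.Arc, inner ℝ (S' ψ) φ = (inner ℝ ψ (S' φ) : ℝ) := by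
    intro ψ φ
    have h4 : LinearMap.adjoint S' = S' := by
      rw [hS', adjoint_toEuclideanLin, smat_transpose]
    conv_lhs => rw [← h4]
    rw [LinearMap.adjoint_inner_left]
  have part6 : ∀ ψ ∈ Lᗮ, ∀ φ ∈ Lᗮ, inner ℝ (E ψ) φ = (inner ℝ ψ (E φ) : ℝ) := by
    intro ψ hψ φ hφ
    rw [hmem] at hψ hφ
    rw [hE ψ hψ.1, hE φ hφ.1, inner_neg_left, inner_neg_right, hSadj]
  exact ⟨part1, part2, part3, part4, hEE, part6⟩


/-- The orthogonal complement of `ℒ = ran Kᵀ + ran SKᵀ` is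
`(ker(S+1) ∩ ker K) ⊕ (ker(S−1) ∩ ker K)`; the evolution `E = S(2KᵀK − 1)` acts as
`+1` on the first summand and `−1` on the second, so `ℒ^⊥` is `E`-invariant and
`E` restricted to `ℒ^⊥` is a self-adjoint unitary (an involution). -/
theorem calL_perp_decomposition (G : SimpleGraph V) [DecidableRel G.Adj] (dt : V → ℕ)
    (hconn : G.Connected) (hle : ∀ u, G.degree u ≤ dt u) (hbd : ∃ u, G.degree u < dt u) :
    let K := Matrix.toEuclideanLin (Kmat G dt)
    let E := Matrix.toEuclideanLin
      (Smat G * ((2 : ℝ) • ((Kmat G dt).transpose * Kmat G dt) - 1))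
    let L := LinearMap.range (Matrix.toEuclideanLin (Kmat G dt).transpose) ⊔
      LinearMap.range (Matrix.toEuclideanLin (Smat G * (Kmat G dt).transpose))
    Lᗮ = (LinearMap.ker (Matrix.toEuclideanLin (Smat G + 1)) ⊓ LinearMap.ker K) ⊔
        (LinearMap.ker (Matrix.toEuclideanLin (Smat G - 1)) ⊓ LinearMap.ker K) ∧
    (∀ ψ, ψ ∈ LinearMap.ker (Matrix.toEuclideanLin (Smat G + 1)) ⊓ LinearMap.ker K →
      E ψ = ψ) ∧
    (∀ ψ, ψ ∈ LinearMap.ker (Matrix.toEuclideanLin (Smat G - 1)) ⊓ LinearMap.ker K →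
      E ψ = -ψ) ∧
    Submodule.map E Lᗮ = Lᗮ ∧
    (∀ ψ ∈ Lᗮ, E (E ψ) = ψ) ∧
    (∀ ψ ∈ Lᗮ, ∀ φ ∈ Lᗮ, inner ℝ (E ψ) φ = (inner ℝ ψ (E φ) : ℝ)) := by
  exact aux_main G (Kmat G dt)
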